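/- Let G be a finite group, w ∈ F_d, and γ, γ' two anti-automorphisms of G. Then (G, w) is weakly γ-chiral if and only if (G, w) is weakly γ'-chiral. That is, weak γ-chirality does not depend on the choice of anti-automorphism γ. -/

import Mathlib

/-- `f` is an anti-automorphism of the group `G`. -/
def IsAntiAut {G : Type*} [Group G] (f : G → G) : Prop :=
  Function.Bijective f ∧ ∀ a b : G, f (a * b) = f b * f a

/-- The word map `G^d → G` associated to `w`. -/
def wordMap {d : ℕ} {G : Type*} [Group G] (w : FreeGroup (Fin d)) (g : Fin d → G) : G :=
  (FreeGroup.lift g) w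

/-- `(G, w)` is weakly `γ`-chiral: some `g ∈ G` has fibers of different cardinalities
under `w` and `w_γ`. -/
def WeaklyGammaChiral {d : ℕ} (G : Type*) [Group G] (w : FreeGroup (Fin d))
    (γ : G → G) : Prop :=
  ∃ g : G, Nat.card ((wordMap w) ⁻¹' {g}) ≠ Nat.card ((fun v => γ (wordMap w v)) ⁻¹' {g})

lemma wordMap_comp {d : ℕ} {G : Type*} [Group G] (w : FreeGroup (Fin d)) (α : G →* G)
    (v : Fin d → G) : wordMap w (α ∘ v) = α (wordMap w v) := by
  unfold wordMap
  have : FreeGroup.lift (α ∘ v) = α.comp (FreeGroup.lift v) := by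
    apply FreeGroup.ext_hom
    intro x
    simp
  rw [this]; rfl

lemma fiber_card {d : ℕ} {G : Type*} [Group G] (w : FreeGroup (Fin d)) (α : G →* G)
    (hα : Function.Bijective α) (x : G) :
    Nat.card ((wordMap w) ⁻¹' {x}) = Nat.card ((wordMap w) ⁻¹' {α x}) := by
  let e : G ≃ G := Equiv.ofBijective α hα
  refine Nat.card_congr ((Equiv.piCongrRight fun _ : Fin d => e).subtypeEquiv fun v => ?_)
  have h1 : (Equiv.piCongrRight fun _ : Fin d => e) v = α ∘ v := rfl
  simp only [Set.mem_preimage, Set.mem_singleton_iff, h1, wordMap_comp]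
  exact ⟨fun h => by rw [h], fun h => hα.1 h⟩

theorem weaklyChiral_indep {d : ℕ} (G : Type*) [Group G] [Finite G]
    (w : FreeGroup (Fin d)) (γ γ' : G → G) (hγ : IsAntiAut γ) (hγ' : IsAntiAut γ') :
    WeaklyGammaChiral G w γ ↔ WeaklyGammaChiral G w γ' := by
  obtain ⟨hγb, hγm⟩ := hγ
  obtain ⟨hγ'b, hγ'm⟩ := hγ'
  let e : G ≃ G := Equiv.ofBijective γ hγb
  let e' : G ≃ G := Equiv.ofBijective γ' hγ'b
  have he : ∀ x, γ (e.symm x) = x := fun x => e.apply_symm_apply x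
  have he' : ∀ x, γ' (e'.symm x) = x := fun x => e'.apply_symm_apply x
  have hsymm : ∀ u v : G, e.symm (u * v) = e.symm v * e.symm u := by
    intro u v
    apply hγb.1
    rw [he, hγm, he, he]
  -- β := γ⁻¹ ∘ γ' is a group homomorphism
  have hmul : ∀ a b : G, e.symm (γ' (a * b)) = e.symm (γ' a) * e.symm (γ' b) := by
    intro a b
    rw [hγ'm, hsymm]
  let β : G →* G :=
    { toFun := fun x => e.symm (γ' x)
      map_one' := by
        have h := hmul 1 1
        simp only [mul_one] at h
        exact (mul_eq_left.mp h.symm)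
      map_mul' := hmul }
  have hβb : Function.Bijective β := e.symm.bijective.comp hγ'b
  -- the key: the γ-fiber and γ'-fiber over g have the same cardinality
  have key : ∀ g : G, Nat.card ((fun v => γ (wordMap w v)) ⁻¹' {g})
      = Nat.card ((fun v => γ' (wordMap w v)) ⁻¹' {g}) := by
    intro g
    have h1 : (fun v => γ (wordMap w v)) ⁻¹' {g} = (wordMap w) ⁻¹' {e.symm g} := by
      ext v
      simp only [Set.mem_preimage, Set.mem_singleton_iff]
      constructor
      · intro h; apply hγb.1; rw [he]; exact h
      · intro h; rw [h, he]
    have h2 : (fun v => γ' (wordMap w v)) ⁻¹' {g} = (wordMap w) ⁻¹' {e'.symm g} := by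
      ext v
      simp only [Set.mem_preimage, Set.mem_singleton_iff]
      constructor
      · intro h; apply hγ'b.1; rw [he']; exact h
      · intro h; rw [h, he']
    rw [h1, h2]
    have h3 : β (e'.symm g) = e.symm g := by
      show e.symm (γ' (e'.symm g)) = e.symm g
      rw [he']
    rw [← h3]
    exact (fiber_card w β hβb (e'.symm g)).symm
  constructor
  · rintro ⟨g, hg⟩; exact ⟨g, by rw [← key g]; exact hg⟩
  · rintro ⟨g, hg⟩; exact ⟨g, by rw [key g]; exact hg⟩
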